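/- Let μ ∈ {μ₁, μ₂} and let w ∈ Perm^sp(μ) not be a translation element, so that some element of {1,…,2n} is proper. Let a be the minimal proper element of {1,…,2n}, with K_a = [ã, a). Then a ≤ n, a < ã, and ã ≠ a*. -/

import Mathlib

open Finset

namespace OrthLM

/-- Membership in the cocharacter lattice `X` of the standard maximal torus of `GO_{2n}`:
integer vectors with `r_i + r_{i*}` independent of `i`. -/
def inX (n : ℕ) (v : Fin (2*n) → ℤ) : Prop :=
  ∀ i j : Fin (2*n), v i + v i.rev = v j + v j.rev

/-- Membership in `S^h_{2n}`: permutations commuting with the involution `i ↦ i* = 2n+1-i`. -/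
def inSh (n : ℕ) (σ : Equiv.Perm (Fin (2*n))) : Prop :=
  ∀ i, σ i.rev = (σ i).rev

/-- Membership in `W°`: elements of `S^h_{2n}` that are even as permutations. -/
def inW0 (n : ℕ) (σ : Equiv.Perm (Fin (2*n))) : Prop :=
  inSh n σ ∧ Equiv.Perm.sign σ = 1

/-- Elements of the ambient group of the Iwahori-Weyl group `W̃ = X ⋊ S^h_{2n}`,
represented as pairs (translation part, finite part). -/
abbrev Wt (n : ℕ) := (Fin (2*n) → ℤ) × Equiv.Perm (Fin (2*n))

/-- Membership in the Iwahori-Weyl group `W̃ = X ⋊ S^h_{2n}`. -/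
def inWt (n : ℕ) (w : Wt n) : Prop := inX n w.1 ∧ inSh n w.2

def wone (n : ℕ) : Wt n := (0, 1)

/-- Multiplication in `W̃` (compatible with the affine action `(v,σ)·x = v + σx`). -/
def wmul (n : ℕ) (w w' : Wt n) : Wt n :=
  (fun i => w.1 i + w'.1 (w.2⁻¹ i), w.2 * w'.2)

/-- Inversion in `W̃`. -/
def winv (n : ℕ) (w : Wt n) : Wt n := (fun i => -(w.1 (w.2 i)), w.2⁻¹)

/-- The translation element `t_μ`. -/
def wtrans (n : ℕ) (μ : Fin (2*n) → ℤ) : Wt n := (μ, 1)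

/-- A finite Weyl group element regarded in `W̃`. -/
def wperm (n : ℕ) (σ : Equiv.Perm (Fin (2*n))) : Wt n := (0, σ)

/-- The affine action of `W̃` on `ℤ^{2n}`: `(v,σ)·x = v + σx` with `(σx)(i) = x(σ⁻¹ i)`. -/
def wact (n : ℕ) (w : Wt n) (x : Fin (2*n) → ℤ) : Fin (2*n) → ℤ :=
  fun i => w.1 i + x (w.2⁻¹ i)

/-- The affine action of `W̃` on `ℝ^{2n}`. -/
def wactR (n : ℕ) (w : Wt n) (x : Fin (2*n) → ℝ) : Fin (2*n) → ℝ :=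
  fun i => (w.1 i : ℝ) + x (w.2⁻¹ i)

/-- The action of a permutation on vectors: `(σμ)(i) = μ(σ⁻¹ i)`. -/
def permAct (n : ℕ) (σ : Equiv.Perm (Fin (2*n))) (μ : Fin (2*n) → ℤ) : Fin (2*n) → ℤ :=
  fun i => μ (σ⁻¹ i)

/-- The cocharacter `μ₁ = (1^{(n)}, 0^{(n)})`. -/
def mu1 (n : ℕ) : Fin (2*n) → ℤ := fun j => if (j:ℕ) < n then 1 else 0

/-- The cocharacter `μ₂ = (1^{(n-1)}, 0, 1, 0^{(n-1)})`. -/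
def mu2 (n : ℕ) : Fin (2*n) → ℤ := fun j => if (j:ℕ) < n - 1 ∨ (j:ℕ) = n then 1 else 0

/-- The vertices `ω_k = ((-1)^{(k)}, 0^{(2n-k)})` of the standard extended alcove. -/
def om (n : ℕ) (k : ℕ) : Fin (2*n) → ℤ := fun j => if (j:ℕ) < k then -1 else 0

/-- The extended alcove `v_k = w·ω_k` of `w`. -/
def valc (n : ℕ) (w : Wt n) (k : ℕ) : Fin (2*n) → ℤ := wact n w (om n k)

/-- The vector `μ_k^w = v_k - ω_k`. -/
def muk (n : ℕ) (w : Wt n) (k : ℕ) : Fin (2*n) → ℤ :=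
  fun j => valc n w k j - om n k j

/-- The set `E_k^w = {j : μ_k^w(j) = 0}`. -/
def Ew (n : ℕ) (w : Wt n) (k : ℕ) : Finset (Fin (2*n)) :=
  univ.filter fun j => muk n w k j = 0

/-- `GL`-permissibility: `Σ v_0 = n` and `ω_k ≤ v_k ≤ ω_k + (1,…,1)` for `0 ≤ k ≤ 2n-1`. -/
def GLperm (n : ℕ) (w : Wt n) : Prop :=
  (∑ j, valc n w 0 j) = (n : ℤ) ∧
  ∀ k < 2*n, ∀ j, om n k j ≤ valc n w k j ∧ valc n w k j ≤ om n k j + 1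

/-- A vector `μ ∈ {0,1}^{2n}` is totally isotropic if `μ(j) + μ(j*) = 1` for all `j`. -/
def TotIso (n : ℕ) (μ : Fin (2*n) → ℤ) : Prop := ∀ j, μ j + μ j.rev = 1

/-- `μ`-spin-permissibility: `GL`-permissible and every totally isotropic `μ_k^w`
(for `0 ≤ k ≤ n`) lies in the `W°`-orbit of `μ`. -/
def SpinPerm (n : ℕ) (μ : Fin (2*n) → ℤ) (w : Wt n) : Prop :=
  GLperm n w ∧ ∀ k ≤ n, TotIso n (muk n w k) →
    ∃ σ, inW0 n σ ∧ muk n w k = permAct n σ μ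

/-- Membership in the coroot lattice `Q^∨`. -/
def inQv (n : ℕ) (v : Fin (2*n) → ℤ) : Prop :=
  inX n v ∧ (∀ i, v i + v i.rev = 0) ∧
  Even (∑ i ∈ univ.filter (fun i : Fin (2*n) => (i:ℕ) < n), v i)

/-- Membership in the affine Weyl group `W_a = Q^∨ ⋊ W°`. -/
def inWa (n : ℕ) (x : Wt n) : Prop := inQv n x.1 ∧ inW0 n x.2

/-- The affine reflection `s_{i,j;d}` (for `j ∉ {i, i*}`), sending `x` to the vector with
`x_j + d` in slot `i`, `x_i - d` in slot `j`, `x_{i*} + d` in slot `j*`, `x_{j*} - d` in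
slot `i*`. -/
def wrefl (n : ℕ) (i j : Fin (2*n)) (d : ℤ) : Wt n :=
  (fun l => if l = i then d else if l = j then -d else if l = j.rev then d
            else if l = i.rev then -d else 0,
   Equiv.swap i j * Equiv.swap i.rev j.rev)

/-- Successor modulo `2n` on representatives `{0,…,2n-1}` of `ℤ/2nℤ`. -/
def csucc (n : ℕ) (k : Fin (2*n)) : Fin (2*n) :=
  ⟨((k:ℕ) + 1) % (2*n), Nat.mod_lt _ k.pos⟩

/-- Predecessor modulo `2n`. -/
def cpred (n : ℕ) (k : Fin (2*n)) : Fin (2*n) :=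
  ⟨((k:ℕ) + (2*n - 1)) % (2*n), Nat.mod_lt _ k.pos⟩

/-- Negation modulo `2n`. -/
def cneg (n : ℕ) (k : Fin (2*n)) : Fin (2*n) :=
  ⟨(2*n - (k:ℕ)) % (2*n), Nat.mod_lt _ k.pos⟩

/-- The star involution on classes mod `2n`: the class of `m` goes to the class of
`m* = 2n+1-m`, i.e. `c ↦ 1 - c`. -/
def cstar (n : ℕ) (k : Fin (2*n)) : Fin (2*n) := csucc n (cneg n k)

/-- The representative in `{1,…,2n}` of a class mod `2n`. -/
def pv (n : ℕ) (k : Fin (2*n)) : ℕ := if (k:ℕ) = 0 then 2*n else (k:ℕ)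

/-- The cyclic interval `[a, b)` in `ℤ/2nℤ`. -/
def cyc (n : ℕ) (a b : Fin (2*n)) : Finset (Fin (2*n)) :=
  univ.filter fun k => ((k:ℕ) + 2*n - (a:ℕ)) % (2*n) < ((b:ℕ) + 2*n - (a:ℕ)) % (2*n)

/-- The set `K_m = {k ∈ ℤ/2nℤ : μ_k^w(m) = 0}` (indices `m` are 0-indexed: the slot `m`
corresponds to the paper's `m+1 ∈ {1,…,2n}`; classes are represented by `{0,…,2n-1}`). -/
def Kset (n : ℕ) (w : Wt n) (m : Fin (2*n)) : Finset (Fin (2*n)) :=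
  univ.filter fun k => muk n w (k:ℕ) m = 0

/-- The slot `m` is proper: `K_{m+1}` (paper indexing) is a cyclic interval `[m̃, m+1)`
with lower endpoint `m̃` different from the class of `m+1`. -/
def isProper (n : ℕ) (w : Wt n) (m : Fin (2*n)) : Prop :=
  ∃ mt, mt ≠ csucc n m ∧ Kset n w m = cyc n mt (csucc n m)

/-- The constraint cutting out `X ⊗ ℝ` inside `ℝ^{2n}`. -/
def inXR (n : ℕ) (x : Fin (2*n) → ℝ) : Prop :=
  ∀ i j : Fin (2*n), x i + x i.rev = x j + x j.rev

/-- The closure (in `X ⊗ ℝ`, lifted to `ℝ^{2n}`) of the preimage `Ã` of the base alcove: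
the points of `X ⊗ ℝ` on which every positive root `x_i - x_j`, `x_i + x_j - c(x)`
(`1 ≤ i < j ≤ n`) takes values in `[-1, 0]`. -/
def ClA (n : ℕ) : Set (Fin (2*n) → ℝ) :=
  {x | inXR n x ∧
       ∀ i j : Fin (2*n), i < j → (j:ℕ) < n →
         (-1 ≤ x i - x j ∧ x i - x j ≤ 0 ∧
          -1 ≤ x i + x j - (x i + x i.rev) ∧ x i + x j - (x i + x i.rev) ≤ 0)}

/-- The stabilizer `Ω` in `W̃` of the base alcove. -/
def inOmega (n : ℕ) (w : Wt n) : Prop :=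
  inWt n w ∧ (wactR n w) '' ClA n = ClA n

/-- The Coxeter generators of `W_a`: the reflections in the walls of the base alcove,
namely `s_{i,i+1;0}` for `1 ≤ i ≤ n-1`, `s_{n-1,n+1;0}`, and `s_{1,2n-1;-1}`
(paper 1-indexed; here 0-indexed). -/
def sgens (n : ℕ) (hn : 2 ≤ n) : Set (Wt n) :=
  {w | (∃ i : Fin (2*n), (i:ℕ) + 1 < n ∧ w = wrefl n i (csucc n i) 0) ∨
       w = wrefl n ⟨n-2, by omega⟩ ⟨n, by omega⟩ 0 ∨
       w = wrefl n ⟨0, by omega⟩ ⟨2*n-2, by omega⟩ (-1)}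

def wprod (n : ℕ) (L : List (Wt n)) : Wt n := L.foldr (wmul n) (wone n)

/-- A word in the Coxeter generators of `W_a`. -/
def isWord (n : ℕ) (hn : 2 ≤ n) (L : List (Wt n)) : Prop := ∀ s ∈ L, s ∈ sgens n hn

/-- The length function on `W̃`: `ℓ(xω) = ℓ(x)` for `x ∈ W_a`, `ω ∈ Ω`, where `ℓ(x)` is
the minimal length of a word in the Coxeter generators expressing `x`. -/
noncomputable def lenW (n : ℕ) (hn : 2 ≤ n) (w : Wt n) : ℕ :=
  sInf {m | ∃ L ω, isWord n hn L ∧ L.length = m ∧ inOmega n ω ∧ w = wmul n (wprod n L) ω}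

/-- The Bruhat order on `W̃`: `xω ≤ x'ω'` iff `ω = ω'` and `x ≤ x'` in `W_a`, the latter
expressed by the subword property for a reduced word of `x'`. -/
def wle (n : ℕ) (hn : 2 ≤ n) (w w' : Wt n) : Prop :=
  ∃ L ω, isWord n hn L ∧ inOmega n ω ∧ w' = wmul n (wprod n L) ω ∧
    L.length = lenW n hn w' ∧ ∃ L', L'.Sublist L ∧ w = wmul n (wprod n L') ω

/-- Strict Bruhat order on `W̃`. -/
def wlt (n : ℕ) (hn : 2 ≤ n) (w w' : Wt n) : Prop := wle n hn w w' ∧ w ≠ w'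

/-- The `μ`-admissible set `Adm°(μ)` for `G°`: `w ≤ σ t_μ σ⁻¹` for some `σ ∈ W°`. -/
def AdmO (n : ℕ) (hn : 2 ≤ n) (μ : Fin (2*n) → ℤ) (w : Wt n) : Prop :=
  ∃ σ, inW0 n σ ∧
    wle n hn w (wmul n (wperm n σ) (wmul n (wtrans n μ) (wperm n σ⁻¹)))

/-- The `μ`-admissible set `Adm(μ)` for `G`: `w ≤ σ t_μ σ⁻¹` for some `σ ∈ S^h_{2n}`. -/
def AdmFull (n : ℕ) (hn : 2 ≤ n) (μ : Fin (2*n) → ℤ) (w : Wt n) : Prop :=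
  ∃ σ, inSh n σ ∧
    wle n hn w (wmul n (wperm n σ) (wmul n (wtrans n μ) (wperm n σ⁻¹)))

/-- The element `τ = (n, n+1) ∈ S^h_{2n}` (paper 1-indexed). -/
def tau (n : ℕ) (hn : 2 ≤ n) : Equiv.Perm (Fin (2*n)) :=
  Equiv.swap ⟨n-1, by omega⟩ ⟨n, by omega⟩
variable {n : ℕ}

lemma val_rev' (i : Fin (2*n)) : (i.rev : ℕ) = 2*n - 1 - (i:ℕ) := by
  rw [Fin.val_rev]; omega

lemma mod2n (hn : 0 < n) {x : ℕ} (hx : x < 4*n) :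
    x % (2*n) = if x < 2*n then x else x - 2*n := by
  split_ifs with h
  · exact Nat.mod_eq_of_lt h
  · rw [Nat.mod_eq_sub_mod (by omega), Nat.mod_eq_of_lt (by omega)]

lemma Dval (hn : 0 < n) {a b : ℕ} (ha : a < 2*n) (hb : b < 2*n) :
    (a + 2*n - b) % (2*n) = if b ≤ a then a - b else a + 2*n - b := by
  rw [mod2n hn (by omega)]; split_ifs <;> omega

lemma csucc_val (k : Fin (2*n)) : (csucc n k : ℕ) = ((k:ℕ) + 1) % (2*n) := rfl

lemma csucc_val' (hn : 0 < n) (k : Fin (2*n)) :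
    (csucc n k : ℕ) = if (k:ℕ) + 1 = 2*n then 0 else (k:ℕ) + 1 := by
  rw [csucc_val]; split_ifs with h
  · simp [h]
  · exact Nat.mod_eq_of_lt (by have := k.isLt; omega)

lemma csucc_inj (hn : 0 < n) {x y : Fin (2*n)} (h : csucc n x = csucc n y) : x = y := by
  have hx := csucc_val' hn x
  have hy := csucc_val' hn y
  have : (csucc n x : ℕ) = (csucc n y : ℕ) := by rw [h]
  have hx' := x.isLt; have hy' := y.isLt
  apply Fin.ext
  rw [hx, hy] at this
  split_ifs at this <;> omega

lemma mem_cyc {x y k : Fin (2*n)} :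
    k ∈ cyc n x y ↔ ((k:ℕ) + 2*n - (x:ℕ)) % (2*n) < ((y:ℕ) + 2*n - (x:ℕ)) % (2*n) := by
  simp [cyc]

lemma mem_cyc_self (hn : 0 < n) {x c : Fin (2*n)} (h : x ≠ c) : x ∈ cyc n x c := by
  rw [mem_cyc, Dval hn x.isLt x.isLt, Dval hn c.isLt x.isLt]
  have : (x:ℕ) ≠ (c:ℕ) := fun he => h (Fin.ext he)
  have := x.isLt; have := c.isLt
  split_ifs <;> omega

lemma not_mem_cyc_right {x c : Fin (2*n)} : c ∉ cyc n x c := by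
  rw [mem_cyc]; exact lt_irrefl _

lemma cyc_inj (hn : 0 < n) {x y c : Fin (2*n)} (hx : x ≠ c) (hy : y ≠ c)
    (h : cyc n x c = cyc n y c) : x = y := by
  have h1 : x ∈ cyc n y c := h ▸ mem_cyc_self hn hx
  have h2 : y ∈ cyc n x c := h.symm ▸ mem_cyc_self hn hy
  rw [mem_cyc, Dval hn x.isLt y.isLt, Dval hn c.isLt y.isLt] at h1
  rw [mem_cyc, Dval hn y.isLt x.isLt, Dval hn c.isLt x.isLt] at h2
  have hxc : (x:ℕ) ≠ (c:ℕ) := fun he => hx (Fin.ext he)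
  have hyc : (y:ℕ) ≠ (c:ℕ) := fun he => hy (Fin.ext he)
  have := x.isLt; have := y.isLt; have := c.isLt
  apply Fin.ext
  split_ifs at h1 h2 <;> omega

lemma pv_csucc (hn : 0 < n) (x : Fin (2*n)) : pv n (csucc n x) = (x:ℕ) + 1 := by
  have := x.isLt
  rcases Nat.lt_or_ge ((x:ℕ)+1) (2*n) with h | h
  · have h1 : (csucc n x : ℕ) = (x:ℕ)+1 := by rw [csucc_val' hn, if_neg (by omega)]
    simp [pv, h1]
  · have h2 : (x:ℕ)+1 = 2*n := by omega
    have h1 : (csucc n x : ℕ) = 0 := by rw [csucc_val' hn, if_pos h2]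
    simp [pv, h1]; omega

lemma perm_apply_inv_self {α : Type*} (f : Equiv.Perm α) (x : α) : f (f⁻¹ x) = x :=
  f.apply_symm_apply x

lemma perm_inv_apply_self {α : Type*} (f : Equiv.Perm α) (x : α) : f⁻¹ (f x) = x :=
  f.symm_apply_apply x

lemma inSh_inv {σ : Equiv.Perm (Fin (2*n))} (h : inSh n σ) : inSh n σ⁻¹ := by
  intro i
  have h2 : σ ((σ⁻¹ i).rev) = i.rev := by
    rw [h (σ⁻¹ i), perm_apply_inv_self]
  rw [← h2, perm_inv_apply_self]

lemma muk_eq (w : Wt n) (k : ℕ) (j : Fin (2*n)) :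
    muk n w k j = w.1 j + (if (j:ℕ) < k then 1 else 0)
      - (if ((w.2⁻¹ j : Fin (2*n)):ℕ) < k then 1 else 0) := by
  simp only [muk, valc, wact, om]
  split_ifs <;> ring

lemma muk_mem {w : Wt n} (hg : GLperm n w) {k : ℕ} (hk : k < 2*n) (j : Fin (2*n)) :
    muk n w k j = 0 ∨ muk n w k j = 1 := by
  have h := hg.2 k hk j
  simp only [muk]
  omega

lemma muk_zero_iff {w : Wt n} (hg : GLperm n w) (hn : 0 < n) {b s : Fin (2*n)}
    (hs : w.2⁻¹ b = s) {k : ℕ} (hk : k < 2*n) :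
    (muk n w k b = 0) ↔
      (if (s:ℕ) < (b:ℕ) then ((s:ℕ) < k ∧ k ≤ (b:ℕ))
       else if (b:ℕ) < (s:ℕ) then (k ≤ (b:ℕ) ∨ (s:ℕ) < k)
       else w.1 b = 0) := by
  have h0 : muk n w 0 b = w.1 b := by
    rw [muk_eq]; simp
  have hv0 : w.1 b = 0 ∨ w.1 b = 1 := by rw [← h0]; exact muk_mem hg (by omega) b
  have hb := muk_mem hg b.isLt b
  have hss := muk_mem hg s.isLt b
  rw [muk_eq, hs] at hb hss ⊢
  have hsb : (s:ℕ) = (b:ℕ) → s = b := fun h => Fin.ext h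
  by_cases hcase : (s:ℕ) = (b:ℕ)
  · have heqf := hsb hcase
    rw [heqf] at hb hss ⊢
    split_ifs at hb hss ⊢ <;> omega
  · split_ifs at hb hss ⊢ <;> omega

lemma Kset_eq {w : Wt n} (hg : GLperm n w) (hn : 0 < n) {b : Fin (2*n)}
    (hs : w.2⁻¹ b ≠ b) :
    Kset n w b = cyc n (csucc n (w.2⁻¹ b)) (csucc n b) := by
  obtain ⟨s, hsdef⟩ : ∃ s, w.2⁻¹ b = s := ⟨_, rfl⟩
  rw [hsdef]
  have hsb : (s:ℕ) ≠ (b:ℕ) := fun h => (hsdef ▸ hs) (Fin.ext h)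
  ext k
  rw [Kset, mem_filter, mem_cyc]
  simp only [mem_univ, true_and]
  rw [muk_zero_iff hg hn hsdef k.isLt]
  have hks := k.isLt; have hbs := b.isLt; have hss := s.isLt
  rw [csucc_val' hn s, csucc_val' hn b]
  have e1 : ((k:ℕ) + 2*n - (if (s:ℕ)+1 = 2*n then 0 else (s:ℕ)+1)) % (2*n)
      = if (if (s:ℕ)+1 = 2*n then 0 else (s:ℕ)+1) ≤ (k:ℕ)
        then (k:ℕ) - (if (s:ℕ)+1 = 2*n then 0 else (s:ℕ)+1)
        else (k:ℕ) + 2*n - (if (s:ℕ)+1 = 2*n then 0 else (s:ℕ)+1) := by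
    apply Dval hn hks; split_ifs <;> omega
  have e2 : ((if (b:ℕ)+1 = 2*n then 0 else (b:ℕ)+1) + 2*n - (if (s:ℕ)+1 = 2*n then 0 else (s:ℕ)+1)) % (2*n)
      = if (if (s:ℕ)+1 = 2*n then 0 else (s:ℕ)+1) ≤ (if (b:ℕ)+1 = 2*n then 0 else (b:ℕ)+1)
        then (if (b:ℕ)+1 = 2*n then 0 else (b:ℕ)+1) - (if (s:ℕ)+1 = 2*n then 0 else (s:ℕ)+1)
        else (if (b:ℕ)+1 = 2*n then 0 else (b:ℕ)+1) + 2*n - (if (s:ℕ)+1 = 2*n then 0 else (s:ℕ)+1) := by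
    apply Dval hn <;> split_ifs <;> omega
  rw [e1, e2]
  split_ifs <;> omega

lemma isProper_iff {w : Wt n} (hg : GLperm n w) (hn : 0 < n) {b : Fin (2*n)} :
    isProper n w b ↔ w.2⁻¹ b ≠ b := by
  constructor
  · rintro ⟨mt, hmt, hK⟩ heq
    have hconst : ∀ k : ℕ, muk n w k b = w.1 b := by
      intro k
      rw [muk_eq, heq]
      ring
    have h1 : mt ∈ Kset n w b := hK ▸ mem_cyc_self hn hmt
    have h2 : csucc n b ∉ Kset n w b := hK ▸ not_mem_cyc_right
    rw [Kset, mem_filter, hconst] at h1 h2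
    simp only [mem_univ, true_and] at h1 h2
    exact h2 h1
  · intro hs
    refine ⟨csucc n (w.2⁻¹ b), fun h => hs (csucc_inj hn h), Kset_eq hg hn hs⟩

/-- Number of "flipped" pairs of `σ`. -/
def flips (n : ℕ) (σ : Equiv.Perm (Fin (2*n))) : ℕ :=
  (univ.filter fun i : Fin (2*n) => (i:ℕ) < n ∧ n ≤ ((σ i):ℕ)).card

/-- Number of zeros in the first half. -/
def Zc (n : ℕ) (ν : Fin (2*n) → ℤ) : ℕ :=
  (univ.filter fun i : Fin (2*n) => (i:ℕ) < n ∧ ν i = 0).card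

lemma swap_rev (i b y : Fin (2*n)) :
    Equiv.swap i.rev b.rev y.rev = (Equiv.swap i b y).rev := by
  have hiL := i.isLt; have hbL := b.isLt; have hyL := y.isLt
  have e1 := val_rev' i; have e2 := val_rev' b; have e3 := val_rev' y
  have e4 := val_rev' (Equiv.swap i b y)
  simp only [Equiv.swap_apply_def, Fin.ext_iff]
  split_ifs <;> omega

lemma swap_rev' (i b y : Fin (2*n)) :
    Equiv.swap i b y.rev = (Equiv.swap i.rev b.rev y).rev := by
  have := swap_rev (n := n) i.rev b.rev y
  rwa [Fin.rev_rev, Fin.rev_rev] at this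

lemma swaps_comm {i b : Fin (2*n)} (hi : (i:ℕ) < n) (hb : (b:ℕ) < n) (z : Fin (2*n)) :
    Equiv.swap i.rev b.rev (Equiv.swap i b z) = Equiv.swap i b (Equiv.swap i.rev b.rev z) := by
  have hiL := i.isLt; have hbL := b.isLt; have hzL := z.isLt
  have e1 := val_rev' i; have e2 := val_rev' b; have e3 := val_rev' z
  simp only [Equiv.swap_apply_def, Fin.ext_iff]
  split_ifs <;> omega

lemma ne_rev_of_lt {x y : Fin (2*n)} (hx : (x:ℕ) < n) (hy : (y:ℕ) < n) : x ≠ y.rev := by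
  intro h
  have h2 : (x:ℕ) = (y.rev:ℕ) := by rw [h]
  rw [val_rev'] at h2
  have := y.isLt
  omega

lemma rev_ge {i : Fin (2*n)} (hi : (i:ℕ) < n) : n ≤ (i.rev:ℕ) := by
  rw [val_rev']; have := i.isLt; omega

lemma neg_one_mul_neg_one : ((-1 : ℤˣ)) * (-1) = 1 :=
  Units.ext (by simp)

lemma sign_one_of_half (hn : 0 < n) : ∀ m (σ : Equiv.Perm (Fin (2*n))),
    (univ.filter fun j : Fin (2*n) => σ j ≠ j).card ≤ m → inSh n σ →
    (∀ i : Fin (2*n), (i:ℕ) < n → ((σ i):ℕ) < n) → Equiv.Perm.sign σ = 1 := by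
  intro m
  induction m with
  | zero =>
    intro σ hc _ _
    have hσ : σ = 1 := by
      ext j
      by_contra hj
      have : j ∈ univ.filter fun j : Fin (2*n) => σ j ≠ j := by
        simp only [mem_filter, mem_univ, true_and]
        exact fun h => hj (by rw [h]; rfl)
      have := Finset.card_pos.mpr ⟨j, this⟩
      omega
    rw [hσ]; simp
  | succ m ih =>
    intro σ hc hsh hhalf
    by_cases h1 : σ = 1
    · rw [h1]; simp
    obtain ⟨j0, hj0⟩ : ∃ j, σ j ≠ j := by
      by_contra h; push_neg at h; exact h1 (Equiv.ext h)
    obtain ⟨i, hin, hi⟩ : ∃ i : Fin (2*n), (i:ℕ) < n ∧ σ i ≠ i := by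
      rcases lt_or_ge (j0:ℕ) n with h | h
      · exact ⟨j0, h, hj0⟩
      · refine ⟨j0.rev, by rw [val_rev']; have := j0.isLt; omega, ?_⟩
        rw [hsh j0]
        exact fun he => hj0 (Fin.rev_inj.mp he)
    set b := σ i with hbdef
    have hbn : (b:ℕ) < n := hhalf i hin
    have hbne : b ≠ i := hi
    have hIcase : ∀ x : Fin (2*n), (x:ℕ) < n → x ≠ i.rev ∧ x ≠ b.rev :=
      fun x hx => ⟨ne_rev_of_lt hx hin, ne_rev_of_lt hx hbn⟩
    set t : Equiv.Perm (Fin (2*n)) := Equiv.swap i b * Equiv.swap i.rev b.rev with htdef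
    set σ' : Equiv.Perm (Fin (2*n)) := t * σ with hσ'def
    have htapp : ∀ z, t z = Equiv.swap i b (Equiv.swap i.rev b.rev z) := fun z => rfl
    -- t commutes with rev
    have htrev : ∀ z, t z.rev = (t z).rev := by
      intro z
      rw [htapp, htapp, swap_rev, swap_rev', swaps_comm hin hbn]
    have hσ'rev : inSh n σ' := by
      intro y
      have : σ' y.rev = t (σ y.rev) := rfl
      rw [this, hsh y, htrev]
      rfl
    have hσ'half : ∀ x : Fin (2*n), (x:ℕ) < n → ((σ' x):ℕ) < n := by
      intro x hx
      have hσx : ((σ x):ℕ) < n := hhalf x hx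
      have : σ' x = Equiv.swap i b (Equiv.swap i.rev b.rev (σ x)) := rfl
      rw [this, Equiv.swap_apply_of_ne_of_ne (hIcase _ hσx).1 (hIcase _ hσx).2]
      rcases eq_or_ne (σ x) i with he | he
      · rw [he, Equiv.swap_apply_left]; exact hbn
      rcases eq_or_ne (σ x) b with he2 | he2
      · rw [he2, Equiv.swap_apply_right]; exact hin
      · rw [Equiv.swap_apply_of_ne_of_ne he he2]; exact hσx
    have hfixi : σ' i = i := by
      have : σ' i = Equiv.swap i b (Equiv.swap i.rev b.rev b) := rfl
      rw [this, Equiv.swap_apply_of_ne_of_ne (hIcase _ hbn).1 (hIcase _ hbn).2,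
        Equiv.swap_apply_right]
    have hfixirev : σ' i.rev = i.rev := by
      have h5 : σ i.rev = b.rev := by rw [hsh i]
      have : σ' i.rev = Equiv.swap i b (Equiv.swap i.rev b.rev b.rev) := by
        rw [show σ' i.rev = t (σ i.rev) from rfl, h5, htapp]
      rw [this, Equiv.swap_apply_right,
        Equiv.swap_apply_of_ne_of_ne ((hIcase i hin).1).symm ((hIcase b hbn).1).symm]
    have hmoved : (univ.filter fun j => σ' j ≠ j) ⊆ (univ.filter fun j : Fin (2*n) => σ j ≠ j).erase i := by
      intro x hx
      simp only [mem_filter, mem_univ, true_and] at hx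
      rw [Finset.mem_erase]
      refine ⟨fun he => hx (he ▸ hfixi), ?_⟩
      simp only [mem_filter, mem_univ, true_and]
      intro hfx
      apply hx
      have hxi : x ≠ i := by rintro rfl; exact hi hfx
      have hxb : x ≠ b := by
        rintro rfl
        exact hbne (σ.injective (hbdef.symm.trans hfx.symm)).symm
      have hxir : x ≠ i.rev := by
        rintro rfl
        have h6 : (σ i).rev = i.rev := by rw [← hsh i]; exact hfx
        exact hi (Fin.rev_inj.mp h6)
      have hxbr : x ≠ b.rev := by
        rintro rfl
        have h6 : (σ b).rev = b.rev := by rw [← hsh b]; exact hfx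
        have h7 : σ i = σ b := hbdef.symm.trans (Fin.rev_inj.mp h6).symm
        exact hbne (σ.injective h7).symm
      have : σ' x = Equiv.swap i b (Equiv.swap i.rev b.rev (σ x)) := rfl
      rw [this, hfx, Equiv.swap_apply_of_ne_of_ne hxir hxbr,
        Equiv.swap_apply_of_ne_of_ne hxi hxb]
    have hcard : (univ.filter fun j => σ' j ≠ j).card ≤ m := by
      have hiM : i ∈ univ.filter (fun j : Fin (2*n) => σ j ≠ j) := by
        simp only [mem_filter, mem_univ, true_and]; exact hi
      have h8 := Finset.card_le_card hmoved
      rw [Finset.card_erase_of_mem hiM] at h8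
      omega
    have hsσ' := ih σ' hcard hσ'rev hσ'half
    have hsign : Equiv.Perm.sign σ' = Equiv.Perm.sign σ := by
      rw [hσ'def, htdef, map_mul, map_mul,
        Equiv.Perm.sign_swap hbne.symm,
        Equiv.Perm.sign_swap (fun h => hbne.symm (Fin.rev_inj.mp h))]
      rw [neg_one_mul_neg_one, one_mul]
    rw [← hsign]; exact hsσ'

lemma sign_eq_flips (hn : 0 < n) :
    ∀ F (σ : Equiv.Perm (Fin (2*n))), inSh n σ → flips n σ = F →
      Equiv.Perm.sign σ = (-1)^F := by
  intro F
  induction F with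
  | zero =>
    intro σ hsh hF
    rw [pow_zero]
    apply sign_one_of_half hn _ σ le_rfl hsh
    intro i hi
    by_contra h
    push_neg at h
    have : i ∈ univ.filter fun i : Fin (2*n) => (i:ℕ) < n ∧ n ≤ ((σ i):ℕ) := by
      simp only [mem_filter, mem_univ, true_and]; exact ⟨hi, h⟩
    have := Finset.card_pos.mpr ⟨i, this⟩
    rw [flips] at hF
    omega
  | succ F ih =>
    intro σ hsh hF
    have hpos : 0 < (univ.filter fun i : Fin (2*n) => (i:ℕ) < n ∧ n ≤ ((σ i):ℕ)).card := by
      rw [flips] at hF; omega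
    obtain ⟨i, hi⟩ := Finset.card_pos.mp hpos
    simp only [mem_filter, mem_univ, true_and] at hi
    obtain ⟨hin, hflip⟩ := hi
    have hiirev : i ≠ i.rev := ne_rev_of_lt hin hin
    set σ' : Equiv.Perm (Fin (2*n)) := σ * Equiv.swap i i.rev with hσ'def
    have hswaprev : ∀ y : Fin (2*n), Equiv.swap i i.rev y.rev = (Equiv.swap i i.rev y).rev := by
      intro y
      have := swap_rev (n := n) i.rev i y
      rw [Fin.rev_rev] at this
      rw [Equiv.swap_comm i.rev i] at this
      exact this
    have hσ'rev : inSh n σ' := by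
      intro y
      have h1 : σ' y.rev = σ (Equiv.swap i i.rev y.rev) := rfl
      rw [h1, hswaprev, hsh]
      rfl
    have happ : ∀ x, σ' x = σ (Equiv.swap i i.rev x) := fun x => rfl
    have hset : (univ.filter fun x : Fin (2*n) => (x:ℕ) < n ∧ n ≤ ((σ' x):ℕ))
        = (univ.filter fun x : Fin (2*n) => (x:ℕ) < n ∧ n ≤ ((σ x):ℕ)).erase i := by
      ext x
      simp only [Finset.mem_erase, mem_filter, mem_univ, true_and]
      by_cases hxi : x = i
      · subst hxi
        have h2 : σ' x = (σ x).rev := by rw [happ, Equiv.swap_apply_left, hsh]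
        constructor
        · rintro ⟨hx, hx2⟩
          exfalso
          rw [h2, val_rev'] at hx2
          have := (σ x).isLt
          omega
        · rintro ⟨hne, -⟩
          exact absurd rfl hne
      · constructor
        · rintro ⟨hx, hx2⟩
          rw [happ, Equiv.swap_apply_of_ne_of_ne hxi (ne_rev_of_lt hx hin)] at hx2
          exact ⟨hxi, hx, hx2⟩
        · rintro ⟨-, hx, hx2⟩
          refine ⟨hx, ?_⟩
          rw [happ, Equiv.swap_apply_of_ne_of_ne hxi (ne_rev_of_lt hx hin)]
          exact hx2
    have hiM : i ∈ univ.filter fun x : Fin (2*n) => (x:ℕ) < n ∧ n ≤ ((σ x):ℕ) := by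
      simp only [mem_filter, mem_univ, true_and]; exact ⟨hin, hflip⟩
    have hF' : flips n σ' = F := by
      rw [flips, hset, Finset.card_erase_of_mem hiM]
      rw [flips] at hF
      omega
    have h9 := ih σ' hσ'rev hF'
    have h11 : Equiv.Perm.sign σ' = Equiv.Perm.sign σ * (-1) := by
      rw [hσ'def, map_mul, Equiv.Perm.sign_swap hiirev]
    rw [h11] at h9
    have h10 : Equiv.Perm.sign σ * (-1) * (-1) = (-1)^F * (-1) := by rw [h9]
    rw [mul_assoc, neg_one_mul_neg_one, mul_one] at h10
    rw [pow_succ]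
    exact h10

lemma Z_parity (hn : 0 < n) {σ : Equiv.Perm (Fin (2*n))} (hsh : inSh n σ)
    {ν : Fin (2*n) → ℤ} (h01 : ∀ j, ν j = 0 ∨ ν j = 1) (hiso : TotIso n ν) :
    Zc n (permAct n σ ν) % 2 = (Zc n ν + flips n σ) % 2 := by
  classical
  have hshinv : inSh n σ⁻¹ := inSh_inv hsh
  set A : Finset (Fin (2*n)) :=
    univ.filter (fun j : Fin (2*n) => (j:ℕ) < n ∧ ((σ j):ℕ) < n ∧ ν j = 0) with hA
  set F0 : Finset (Fin (2*n)) :=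
    univ.filter (fun j : Fin (2*n) => (j:ℕ) < n ∧ n ≤ ((σ j):ℕ) ∧ ν j = 0) with hF0
  set F1 : Finset (Fin (2*n)) :=
    univ.filter (fun j : Fin (2*n) => (j:ℕ) < n ∧ n ≤ ((σ j):ℕ) ∧ ν j ≠ 0) with hF1
  -- Zc ν = A.card + F0.card
  have h2 : Zc n ν = A.card + F0.card := by
    rw [Zc]
    rw [← Finset.card_filter_add_card_filter_not
      (s := univ.filter (fun i : Fin (2*n) => (i:ℕ) < n ∧ ν i = 0))
      (p := fun j => ((σ j):ℕ) < n)]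
    congr 1
    · rw [Finset.filter_filter, hA]
      congr 1
      apply Finset.filter_congr
      intro x _
      omega
    · rw [Finset.filter_filter, hF0]
      congr 1
      apply Finset.filter_congr
      intro x _
      omega
  -- flips = F0.card + F1.card
  have h3 : flips n σ = F0.card + F1.card := by
    rw [flips]
    rw [← Finset.card_filter_add_card_filter_not
      (s := univ.filter (fun i : Fin (2*n) => (i:ℕ) < n ∧ n ≤ ((σ i):ℕ)))
      (p := fun j => ν j = 0)]
    congr 1
    · rw [Finset.filter_filter, hF0]
      congr 1
      apply Finset.filter_congr
      intro x _
      omega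
    · rw [Finset.filter_filter, hF1]
      congr 1
      apply Finset.filter_congr
      intro x _
      omega
  -- Zc (permAct σ ν) = card of T := {j | σ j < n ∧ ν j = 0}
  have h1 : Zc n (permAct n σ ν)
      = (univ.filter (fun j : Fin (2*n) => ((σ j):ℕ) < n ∧ ν j = 0)).card := by
    rw [Zc]
    apply Finset.card_bij (fun i _ => σ⁻¹ i)
    · intro x hx
      simp only [mem_filter, mem_univ, true_and] at hx ⊢
      rcases hx with ⟨hx1, hx2⟩
      constructor
      · rw [perm_apply_inv_self]; exact hx1
      · exact hx2
    · intro x hx y hy h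
      exact (Equiv.injective σ⁻¹) h
    · intro y hy
      simp only [mem_filter, mem_univ, true_and] at hy
      refine ⟨σ y, ?_, ?_⟩
      · simp only [mem_filter, mem_univ, true_and]
        constructor
        · exact hy.1
        · simp only [permAct, perm_inv_apply_self]
          exact hy.2
      · simp only [perm_inv_apply_self]
  -- split T
  have h4 : (univ.filter (fun j : Fin (2*n) => ((σ j):ℕ) < n ∧ ν j = 0)).card
      = A.card + F1.card := by
    rw [← Finset.card_filter_add_card_filter_not
      (s := univ.filter (fun j : Fin (2*n) => ((σ j):ℕ) < n ∧ ν j = 0))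
      (p := fun j => (j:ℕ) < n)]
    congr 1
    · rw [Finset.filter_filter, hA]
      congr 1
      apply Finset.filter_congr
      intro x _
      omega
    · -- card of {j | σ j < n, ν j = 0, n ≤ j} = F1.card via rev
      rw [Finset.filter_filter]
      apply Finset.card_bij (fun j _ => j.rev)
      · intro x hx
        simp only [mem_filter, mem_univ, true_and] at hx
        obtain ⟨⟨hs, hv⟩, hge⟩ := hx
        push_neg at hge
        simp only [hF1, mem_filter, mem_univ, true_and]
        have hxrev : (x.rev:ℕ) < n := by rw [val_rev']; have := x.isLt; omega
        refine ⟨hxrev, ?_, ?_⟩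
        · -- n ≤ σ (x.rev)
          have h5 : σ x.rev.rev = (σ x.rev).rev := hsh x.rev
          rw [Fin.rev_rev] at h5
          by_contra hcon
          push_neg at hcon
          have := rev_ge (i := σ x.rev) hcon
          rw [← h5] at this
          omega
        · -- ν x.rev ≠ 0
          have hi := hiso x.rev
          rw [Fin.rev_rev, hv] at hi
          omega
      · intro x hx y hy h
        exact Fin.rev_inj.mp h
      · intro y hy
        simp only [hF1, mem_filter, mem_univ, true_and] at hy
        obtain ⟨hy1, hy2, hy3⟩ := hy
        refine ⟨y.rev, ?_, ?_⟩
        · simp only [mem_filter, mem_univ, true_and]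
          have h5 : σ y.rev = (σ y).rev := hsh y
          constructor
          constructor
          · rw [h5, val_rev']; have := (σ y).isLt; omega
          · have hi := hiso y
            have := h01 y
            omega
          · push_neg
            exact rev_ge hy1
        · rw [Fin.rev_rev]
      
  omega

lemma transl_one {w : Wt n} (hn : 0 < n) (hX : inX n w.1) (hg : GLperm n w) :
    ∀ j, w.1 j + w.1 j.rev = 1 := by
  have hsum : ∑ j, w.1 j = (n:ℤ) := by
    have h := hg.1
    have he : ∀ j, valc n w 0 j = w.1 j := by
      intro j
      simp [valc, wact, om]
    rw [Finset.sum_congr rfl (fun j _ => he j)] at h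
    exact h
  intro j
  have hA : ∑ i : Fin (2*n), (w.1 i + w.1 i.rev) = ∑ _i : Fin (2*n), (w.1 j + w.1 j.rev) :=
    Finset.sum_congr rfl (fun i _ => hX i j)
  rw [Finset.sum_add_distrib] at hA
  have hrev : ∑ i : Fin (2*n), w.1 i.rev = ∑ i, w.1 i :=
    Fintype.sum_equiv Fin.revPerm _ _ (fun x => rfl)
  rw [hrev, hsum, Finset.sum_const, Finset.card_univ, Fintype.card_fin, nsmul_eq_mul] at hA
  have hc : ((2*n:ℕ):ℤ) ≠ 0 := Int.natCast_ne_zero.mpr (by omega)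
  apply mul_left_cancel₀ hc
  rw [mul_one, ← hA]
  push_cast
  ring

lemma mu_facts (hn2 : 2 ≤ n) :
    (∀ j, mu1 n j = 0 ∨ mu1 n j = 1) ∧ TotIso n (mu1 n) ∧
    (∀ j, mu2 n j = 0 ∨ mu2 n j = 1) ∧ TotIso n (mu2 n) := by
  refine ⟨?_, ?_, ?_, ?_⟩
  · intro j
    rw [mu1]
    split_ifs
    · right; rfl
    · left; rfl
  · unfold TotIso
    intro j
    have h1 := val_rev' j
    have h2 := j.isLt
    simp only [mu1]
    split_ifs <;> omega
  · intro j
    rw [mu2]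
    split_ifs
    · right; rfl
    · left; rfl
  · unfold TotIso
    intro j
    have h1 := val_rev' j
    have h2 := j.isLt
    have h3 := (Fin.rev j).isLt
    simp only [mu2]
    split_ifs <;> omega

/-- Let `μ ∈ {μ₁, μ₂}` and let `w ∈ Perm^sp(μ)` not be a translation
element, and let `a` be the minimal proper slot, with `K_a = [ã, a)`.  Then (in the
paper's 1-indexing, where slot `a` has paper index `(a:ℕ)+1` and the class `ã`
corresponds to the paper element `pv ã ∈ {1,…,2n}`): `a ≤ n`, `a < ã`, and `ã ≠ a*`. -/
theorem minimal_proper_element (n : ℕ) (hn : 2 ≤ n)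
    (μ : Fin (2*n) → ℤ) (hμ : μ = mu1 n ∨ μ = mu2 n)
    (w : Wt n) (hw : inWt n w) (hsp : SpinPerm n μ w)
    (a at' : Fin (2*n)) (hne : at' ≠ csucc n a)
    (hKa : Kset n w a = cyc n at' (csucc n a))
    (hmin : ∀ b : Fin (2*n), isProper n w b → a ≤ b) :
    (a:ℕ) + 1 ≤ n ∧ (a:ℕ) + 1 < pv n at' ∧ at' ≠ csucc n a.rev := by
  obtain ⟨hg, hspin⟩ := hsp
  obtain ⟨hX, hsh⟩ := hw
  have hn0 : 0 < n := by omega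
  have hinv : inSh n w.2⁻¹ := inSh_inv hsh
  have hprop : isProper n w a := ⟨at', hne, hKa⟩
  have hsa : w.2⁻¹ a ≠ a := (isProper_iff hg hn0).mp hprop
  have hfix : ∀ b : Fin (2*n), (b:ℕ) < (a:ℕ) → w.2⁻¹ b = b := by
    intro b hb
    by_contra hs
    have hle := hmin b ((isProper_iff hg hn0).mpr hs)
    rw [Fin.le_def] at hle
    omega
  have hfixσ : ∀ b : Fin (2*n), (b:ℕ) < (a:ℕ) → w.2 b = b := by
    intro b hb
    conv_lhs => rw [← hfix b hb]
    exact perm_apply_inv_self _ _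
  have halt : (a:ℕ) < ((w.2⁻¹ a : Fin (2*n)):ℕ) := by
    rcases lt_trichotomy ((w.2⁻¹ a : Fin (2*n)):ℕ) ((a:ℕ)) with h | h | h
    · exfalso
      have h2 := hfixσ (w.2⁻¹ a) h
      rw [perm_apply_inv_self] at h2
      exact hsa h2.symm
    · exact absurd (Fin.ext h) hsa
    · exact h
  have goal1 : (a:ℕ) + 1 ≤ n := by
    by_contra hcon
    push_neg at hcon
    have hall : ∀ x : Fin (2*n), w.2⁻¹ x = x := by
      intro x
      rcases lt_or_ge (x:ℕ) n with h | h
      · exact hfix x (by omega)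
      · have h2 : (x.rev:ℕ) < n := by rw [val_rev']; have := x.isLt; omega
        have h3 := hfix x.rev (by omega)
        have h4 := hinv x.rev
        rw [Fin.rev_rev] at h4
        rw [h4, h3, Fin.rev_rev]
    exact hsa (hall a)
  have hKa2 : Kset n w a = cyc n (csucc n (w.2⁻¹ a)) (csucc n a) := Kset_eq hg hn0 hsa
  have hat' : at' = csucc n (w.2⁻¹ a) :=
    cyc_inj hn0 hne (fun h => hsa (csucc_inj hn0 h)) (hKa.symm.trans hKa2)
  refine ⟨goal1, ?_, ?_⟩
  · rw [hat', pv_csucc hn0]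
    omega
  · rw [hat']
    intro hcon
    have hs_eq : w.2⁻¹ a = a.rev := csucc_inj hn0 hcon
    -- basic values
    have hvra := val_rev' a
    have haL := a.isLt
    have hσa : w.2 a = a.rev := by
      have h1 : w.2 a.rev = a := by rw [← hs_eq, perm_apply_inv_self]
      have h2 := hsh a.rev
      rw [Fin.rev_rev, h1] at h2
      exact h2
    have hvala : w.1 a = 0 := by
      have h0 : muk n w 0 a = w.1 a := by rw [muk_eq]; simp
      rw [← h0]
      rw [muk_zero_iff hg hn0 hs_eq (by omega)]
      rw [if_neg (by omega), if_pos (by omega)]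
      exact Or.inl (by omega)
    have hone := transl_one hn0 hX hg
    have hfixpair : ∀ j : Fin (2*n), (j:ℕ) < (a:ℕ) ∨ ((j.rev):ℕ) < (a:ℕ) → w.2⁻¹ j = j := by
      intro j hj
      rcases hj with hj | hj
      · exact hfix j hj
      · have h3 := hfix j.rev hj
        have h4 := hinv j.rev
        rw [Fin.rev_rev] at h4
        rw [h4, h3, Fin.rev_rev]
    have hiso_cond : ∀ k : ℕ, k = (a:ℕ) ∨ k = (a:ℕ)+1 → TotIso n (muk n w k) := by
      intro k hk
      unfold TotIso
      intro j
      rw [muk_eq, muk_eq]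
      have hrevinv : (w.2⁻¹ j.rev : Fin (2*n)) = (w.2⁻¹ j : Fin (2*n)).rev := hinv j
      rw [hrevinv]
      have hone_j := hone j
      have hval_j := val_rev' j
      have hval_s := val_rev' (w.2⁻¹ j : Fin (2*n))
      have hjL := j.isLt
      have hsL := (w.2⁻¹ j : Fin (2*n)).isLt
      rcases lt_or_ge (j:ℕ) (a:ℕ) with hc | hc
      · rw [hfixpair j (Or.inl hc)]
        split_ifs <;> omega
      rcases lt_or_ge ((j.rev):ℕ) (a:ℕ) with hc2 | hc2
      · rw [hfixpair j (Or.inr hc2)]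
        split_ifs <;> omega
      have hs1 : ¬ ((w.2⁻¹ j : Fin (2*n)):ℕ) < (a:ℕ) := by
        intro h
        have h2 := hfixσ _ h
        rw [perm_apply_inv_self] at h2
        have h3 : (j:ℕ) = ((w.2⁻¹ j : Fin (2*n)):ℕ) := by rw [← h2]
        omega
      have hs2 : ¬ (((w.2⁻¹ j : Fin (2*n)).rev):ℕ) < (a:ℕ) := by
        intro h
        have h2 := hfixσ _ h
        rw [← hrevinv, perm_apply_inv_self] at h2
        have h3 : ((j.rev):ℕ) = (((w.2⁻¹ j : Fin (2*n)).rev):ℕ) := by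
          rw [← hrevinv, ← h2]
        rw [hval_j, val_rev'] at h3
        rw [val_rev'] at h
        omega
      rcases hk with rfl | rfl
      · rw [if_neg (by omega), if_neg (by omega), if_neg (by omega), if_neg (by omega)]
        omega
      · by_cases hja : j = a
        · subst hja
          rw [hs_eq, Fin.rev_rev]
          split_ifs <;> omega
        by_cases hjar : j = a.rev
        · subst hjar
          have h5 : w.2⁻¹ (Fin.rev a) = a := by rw [← hσa, perm_inv_apply_self]
          rw [h5, Fin.rev_rev]
          rw [Fin.rev_rev] at hone_j
          split_ifs <;> omega
        have hjav : (j:ℕ) ≠ (a:ℕ) := fun h => hja (Fin.ext h)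
        have hjrv : ((j.rev):ℕ) ≠ (a:ℕ) := by
          intro h
          apply hjar
          have h6 : j.rev = a := Fin.ext h
          rw [← h6, Fin.rev_rev]
        have hs3 : ((w.2⁻¹ j : Fin (2*n)):ℕ) ≠ (a:ℕ) := by
          intro h
          have h6 : (w.2⁻¹ j : Fin (2*n)) = a := Fin.ext h
          have h7 : j = w.2 a := by rw [← h6, perm_apply_inv_self]
          rw [hσa] at h7
          exact hjar h7
        have hs4 : (((w.2⁻¹ j : Fin (2*n)).rev):ℕ) ≠ (a:ℕ) := by
          intro h
          have h6 : (w.2⁻¹ j : Fin (2*n)).rev = a := Fin.ext h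
          have h7 : (w.2⁻¹ j : Fin (2*n)) = a.rev := by rw [← h6, Fin.rev_rev]
          have h8 : j = w.2 a.rev := by rw [← h7, perm_apply_inv_self]
          have h9 : w.2 a.rev = a := by rw [← hs_eq, perm_apply_inv_self]
          exact hja (h8.trans h9)
        rw [if_neg (by omega), if_neg (by omega), if_neg (by omega), if_neg (by omega)]
        omega
    obtain ⟨τ1, hτ1, heq1⟩ := hspin (a:ℕ) (by omega) (hiso_cond _ (Or.inl rfl))
    obtain ⟨τ2, hτ2, heq2⟩ := hspin ((a:ℕ)+1) (by omega) (hiso_cond _ (Or.inr rfl))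
    have hev : ∀ τ : Equiv.Perm (Fin (2*n)), inW0 n τ → flips n τ % 2 = 0 := by
      intro τ hτ
      have hsf := sign_eq_flips hn0 (flips n τ) τ hτ.1 rfl
      rw [hτ.2] at hsf
      by_contra hodd
      have hoddF : Odd (flips n τ) := Nat.odd_iff.mpr (by omega)
      rw [hoddF.neg_one_pow] at hsf
      have h10 := congrArg Units.val hsf
      simp at h10
    have hev1 := hev τ1 hτ1
    have hev2 := hev τ2 hτ2
    have hμ01 : ∀ j, μ j = 0 ∨ μ j = 1 := by
      rcases hμ with rfl | rfl
      exacts [(mu_facts hn).1, (mu_facts hn).2.2.1]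
    have hμiso : TotIso n μ := by
      rcases hμ with rfl | rfl
      exacts [(mu_facts hn).2.1, (mu_facts hn).2.2.2]
    have hZ1 := Z_parity hn0 hτ1.1 hμ01 hμiso
    rw [← heq1] at hZ1
    have hZ2 := Z_parity hn0 hτ2.1 hμ01 hμiso
    rw [← heq2] at hZ2
    have hmem : a ∈ univ.filter (fun i : Fin (2*n) => (i:ℕ) < n ∧ muk n w (a:ℕ) i = 0) := by
      simp only [mem_filter, mem_univ, true_and]
      refine ⟨by omega, ?_⟩
      rw [muk_eq, hs_eq, if_neg (by omega), if_neg (by omega), hvala]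
      omega
    have hset2 : univ.filter (fun i : Fin (2*n) => (i:ℕ) < n ∧ muk n w ((a:ℕ)+1) i = 0)
        = (univ.filter (fun i : Fin (2*n) => (i:ℕ) < n ∧ muk n w (a:ℕ) i = 0)).erase a := by
      ext x
      simp only [Finset.mem_erase, mem_filter, mem_univ, true_and]
      by_cases hxa : x = a
      · subst hxa
        have hv1 : muk n w ((x:ℕ)+1) x = 1 := by
          rw [muk_eq, hs_eq, if_pos (by omega), if_neg (by rw [val_rev']; omega), hvala]
          omega
        constructor
        · rintro ⟨h, h2⟩
          rw [hv1] at h2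
          exact absurd h2 (by norm_num)
        · rintro ⟨hne2, -⟩
          exact absurd rfl hne2
      · have hxav : (x:ℕ) ≠ (a:ℕ) := fun h => hxa (Fin.ext h)
        by_cases hxn : (x:ℕ) < n
        · have hsxv : ((w.2⁻¹ x : Fin (2*n)):ℕ) ≠ (a:ℕ) := by
            intro h
            have h6 : w.2⁻¹ x = a := Fin.ext h
            have h7 : x = w.2 a := by rw [← h6, perm_apply_inv_self]
            rw [hσa] at h7
            have h8 : (x:ℕ) = ((a.rev):ℕ) := by rw [h7]
            rw [val_rev'] at h8
            omega
          have hmukeq : muk n w ((a:ℕ)+1) x = muk n w (a:ℕ) x := by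
            rw [muk_eq, muk_eq]
            split_ifs <;> omega
          rw [hmukeq]
          constructor
          · rintro ⟨h, h2⟩
            exact ⟨hxa, h, h2⟩
          · rintro ⟨-, h, h2⟩
            exact ⟨h, h2⟩
        · constructor
          · rintro ⟨h, -⟩
            exact absurd h hxn
          · rintro ⟨-, h, -⟩
            exact absurd h hxn
    have hdiff : Zc n (muk n w ((a:ℕ)+1)) + 1 = Zc n (muk n w (a:ℕ)) := by
      rw [Zc, Zc, hset2, Finset.card_erase_of_mem hmem]
      have hpos := Finset.card_pos.mpr ⟨a, hmem⟩
      omega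
    omega
end OrthLM
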